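/- Fix 1 ≤ i ≤ s. Define m: ℝ^i → ℝ by m(x_0, …, x_{i−1}) = Σ_{ℓ=0}^{i−1} e_ℓ·x_ℓ, and let R = {(x_0, …, x_{i−1}) ∈ ℝ^i : x_ℓ ≥ 0 for all ℓ, and Σ_{ℓ=0}^{i−1} γ_{ℓ+1}^{(i)}·x_ℓ ≥ k_i·γ_i^{(i)}}. Then m attains a minimum on R, this minimum equals e_i, and it is attained only at the point (0, …, 0, k_i). -/

import Mathlib

theorem stmt_9
    (s : ℕ) (hs : 1 ≤ s)
    (lam : ℕ → ℚ) (hlam1 : 1 < lam 1)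
    (hlam_mono : ∀ i, 1 ≤ i → i < s → lam i < lam (i + 1))
    (M : ℕ → AddSubgroup ℚ)
    (hM : ∀ i, M i = AddSubgroup.closure ({1} ∪ lam '' Set.Icc 1 i))
    (hlamM : ∀ i, 1 ≤ i → i ≤ s → lam i ∉ M (i - 1))
    (kk : ℕ → ℕ)
    (hkk : ∀ i, 1 ≤ i → i ≤ s →
      IsLeast {m : ℕ | 0 < m ∧ (m : ℚ) * lam i ∈ M (i - 1)} (kk i))
    (e : ℕ → ℕ) (he0 : e 0 = 1)
    (he : ∀ i, 1 ≤ i → i ≤ s → e i = kk i * e (i - 1))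
    (gam : ℕ → ℕ → ℚ)
    (hgam1 : ∀ j, 1 ≤ j → j ≤ s → gam j 1 = (e j : ℚ) * lam 1)
    (hgam : ∀ j, 1 ≤ j → j ≤ s → ∀ ℓ, 1 ≤ ℓ → ℓ ≤ j - 1 →
      gam j (ℓ + 1) = (kk ℓ : ℚ) * gam j ℓ - (e j : ℚ) * lam ℓ + (e j : ℚ) * lam (ℓ + 1)) :
    ∀ i, 1 ≤ i → i ≤ s →
      IsLeast ((fun x : Fin i → ℝ => ∑ ℓ : Fin i, (e (ℓ : ℕ) : ℝ) * x ℓ) ''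
          {x : Fin i → ℝ | (∀ ℓ, 0 ≤ x ℓ) ∧
            ((kk i : ℝ) * (gam i i : ℝ) ≤
              ∑ ℓ : Fin i, (gam i ((ℓ : ℕ) + 1) : ℝ) * x ℓ)})
        (e i : ℝ) ∧
      ∀ x : Fin i → ℝ, (∀ ℓ, 0 ≤ x ℓ) →
        ((kk i : ℝ) * (gam i i : ℝ) ≤ ∑ ℓ : Fin i, (gam i ((ℓ : ℕ) + 1) : ℝ) * x ℓ) →
        (∑ ℓ : Fin i, (e (ℓ : ℕ) : ℝ) * x ℓ) = (e i : ℝ) →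
        x = fun ℓ : Fin i => if (ℓ : ℕ) = i - 1 then (kk i : ℝ) else 0 := by
  intro i hi1 his
  have hkpos : ∀ j, 1 ≤ j → j ≤ s → 0 < kk j := fun j h1 h2 => ((hkk j h1 h2).1).1
  have hepos : ∀ j, j ≤ s → 0 < e j := by
    intro j
    induction j with
    | zero => intro _; simp [he0]
    | succ n ih =>
      intro h
      rw [he (n+1) (by omega) h]
      simp only [Nat.add_sub_cancel]
      exact Nat.mul_pos (hkpos (n+1) (by omega) h) (ih (by omega))
  have hlampos : ∀ ℓ, 1 ≤ ℓ → ℓ ≤ s → (1:ℚ) < lam ℓ := by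
    intro ℓ h1 h2
    induction ℓ with
    | zero => omega
    | succ n ih =>
      rcases Nat.lt_or_ge 1 (n+1) with h | h
      · exact lt_trans (ih (by omega) (by omega)) (hlam_mono n (by omega) (by omega))
      · have : n = 0 := by omega
        subst this; exact hlam1
  have heq : (0:ℚ) < e (i-1) := by exact_mod_cast hepos (i-1) (by omega)
  have heipos : (0:ℚ) < e i := by exact_mod_cast hepos i his
  -- q ℓ = gam i (ℓ+1) / e ℓ
  set q : ℕ → ℚ := fun ℓ => gam i (ℓ+1) / e ℓ with hq
  have heposQ : ∀ ℓ, ℓ ≤ i - 1 → (0:ℚ) < e ℓ := by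
    intro ℓ hℓ; exact_mod_cast hepos ℓ (by omega)
  have hstep : ∀ ℓ, 1 ≤ ℓ → ℓ ≤ i - 1 → q (ℓ-1) < q ℓ := by
    intro ℓ h1 h2
    have hpred : ℓ - 1 + 1 = ℓ := by omega
    have hp1 : (0:ℚ) < e (ℓ-1) := heposQ (ℓ-1) (by omega)
    have hp2 : (0:ℚ) < e ℓ := heposQ ℓ h2
    simp only [hq, hpred]
    rw [div_lt_div_iff₀ hp1 hp2]
    rw [hgam i hi1 his ℓ h1 h2, he ℓ h1 (by omega)]
    have hlt : lam ℓ < lam (ℓ+1) := hlam_mono ℓ h1 (by omega)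
    have hk : (0:ℚ) < kk ℓ := by exact_mod_cast hkpos ℓ h1 (by omega)
    push_cast
    nlinarith [mul_pos (mul_pos heipos (sub_pos.2 hlt)) hp1]
  have hmono : ∀ b, b ≤ i - 1 → ∀ a, a < b → q a < q b := by
    intro b
    induction b with
    | zero => intro _ a ha; omega
    | succ n ih =>
      intro hb a ha
      have hstep' : q n < q (n+1) := by
        have := hstep (n+1) (by omega) hb
        simpa using this
      rcases Nat.lt_or_ge a n with h | h
      · exact lt_trans (ih (by omega) a h) hstep'
      · have : a = n := by omega
        subst this; exact hstep'
  have hq0pos : 0 < q 0 := by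
    simp only [hq]
    rw [hgam1 i hi1 his, he0]
    have := hlampos 1 le_rfl hs
    positivity
  have hqpos : ∀ ℓ, ℓ ≤ i - 1 → 0 < q ℓ := by
    intro ℓ hℓ
    rcases Nat.eq_zero_or_pos ℓ with h | h
    · subst h; exact hq0pos
    · exact lt_trans hq0pos (hmono ℓ hℓ 0 h)
  set r : ℚ := q (i-1) with hr
  have hrpos : 0 < r := hqpos (i-1) le_rfl
  have hii : i - 1 + 1 = i := by omega
  have hgamii : gam i i = r * e (i-1) := by
    simp only [hr, hq, hii]
    field_simp
  have hqle : ∀ ℓ, ℓ ≤ i - 1 → gam i (ℓ+1) ≤ r * e ℓ := by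
    intro ℓ hℓ
    have h1 : q ℓ ≤ r := by
      rcases Nat.eq_or_lt_of_le hℓ with h | h
      · rw [hr, h]
      · exact le_of_lt (hmono (i-1) le_rfl ℓ h)
    have hp : (0:ℚ) < e ℓ := heposQ ℓ hℓ
    calc gam i (ℓ+1) = q ℓ * e ℓ := by simp only [hq]; field_simp
    _ ≤ r * e ℓ := mul_le_mul_of_nonneg_right h1 hp.le
  have hqlt : ∀ ℓ, ℓ < i - 1 → gam i (ℓ+1) < r * e ℓ := by
    intro ℓ hℓ
    have h1 : q ℓ < r := hmono (i-1) le_rfl ℓ hℓ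
    have hp : (0:ℚ) < e ℓ := heposQ ℓ hℓ.le
    calc gam i (ℓ+1) = q ℓ * e ℓ := by simp only [hq]; field_simp
    _ < r * e ℓ := mul_lt_mul_of_pos_right h1 hp
  -- real versions
  set R : ℝ := (r : ℝ) with hR
  have hRpos : (0:ℝ) < R := by rw [hR]; exact_mod_cast hrpos
  have hgamiiR : ((gam i i : ℚ) : ℝ) = R * (e (i-1) : ℝ) := by
    rw [hR]; exact_mod_cast hgamii
  have hqleR : ∀ ℓ : Fin i, ((gam i ((ℓ:ℕ)+1) : ℚ) : ℝ) ≤ R * (e (ℓ:ℕ) : ℝ) := by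
    intro ℓ
    have := hqle (ℓ:ℕ) (by omega)
    rw [hR]; exact_mod_cast this
  have hqltR : ∀ ℓ : Fin i, (ℓ:ℕ) < i - 1 → ((gam i ((ℓ:ℕ)+1) : ℚ) : ℝ) < R * (e (ℓ:ℕ) : ℝ) := by
    intro ℓ h
    have := hqlt (ℓ:ℕ) h
    rw [hR]; exact_mod_cast this
  have heiR : (e i : ℝ) = (kk i : ℝ) * (e (i-1) : ℝ) := by
    have := he i hi1 his
    exact_mod_cast congrArg (fun x : ℕ => (x:ℝ)) this
  set j : Fin i := ⟨i-1, by omega⟩ with hj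
  -- sums over the candidate point
  have hxsum : ∀ (f : Fin i → ℝ),
      (∑ ℓ : Fin i, f ℓ * (if (ℓ:ℕ) = i - 1 then (kk i : ℝ) else 0)) = f j * (kk i : ℝ) := by
    intro f
    rw [Finset.sum_eq_single j]
    · simp [hj]
    · intro b _ hb
      have : (b:ℕ) ≠ i - 1 := by
        intro h; apply hb; apply Fin.ext; simp [hj, h]
      simp [this]
    · simp
  -- lower bound for feasible points
  have hlb : ∀ x : Fin i → ℝ, (∀ ℓ, 0 ≤ x ℓ) →
      ((kk i : ℝ) * (gam i i : ℝ) ≤ ∑ ℓ : Fin i, (gam i ((ℓ:ℕ)+1) : ℝ) * x ℓ) →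
      (e i : ℝ) ≤ ∑ ℓ : Fin i, (e (ℓ:ℕ) : ℝ) * x ℓ := by
    intro x hx hcon
    have h1 : ∑ ℓ : Fin i, (gam i ((ℓ:ℕ)+1) : ℝ) * x ℓ ≤
        ∑ ℓ : Fin i, R * ((e (ℓ:ℕ) : ℝ) * x ℓ) := by
      apply Finset.sum_le_sum
      intro ℓ _
      rw [← mul_assoc]
      exact mul_le_mul_of_nonneg_right (hqleR ℓ) (hx ℓ)
    have h2 : R * (e i : ℝ) ≤ R * ∑ ℓ : Fin i, (e (ℓ:ℕ) : ℝ) * x ℓ := by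
      rw [Finset.mul_sum]
      calc R * (e i : ℝ) = (kk i : ℝ) * (R * (e (i-1) : ℝ)) := by rw [heiR]; ring
      _ = (kk i : ℝ) * (gam i i : ℝ) := by rw [hgamiiR]
      _ ≤ _ := le_trans hcon h1
    exact le_of_mul_le_mul_left h2 hRpos
  constructor
  · constructor
    · -- membership
      refine ⟨fun ℓ => if (ℓ:ℕ) = i - 1 then (kk i : ℝ) else 0, ⟨?_, ?_⟩, ?_⟩
      · intro ℓ
        by_cases h : (ℓ:ℕ) = i - 1 <;> simp [h]
      · rw [hxsum]
        have : ((j:ℕ):ℕ) = i - 1 := rfl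
        simp only [hj]
        rw [show (((⟨i-1, by omega⟩ : Fin i) : ℕ) + 1) = i from hii]
        nlinarith [hRpos, hgamiiR]
      · show (∑ ℓ : Fin i, (e (ℓ:ℕ) : ℝ) * (if (ℓ:ℕ) = i - 1 then (kk i : ℝ) else 0)) = (e i : ℝ)
        rw [hxsum]
        simp only [hj]
        rw [heiR]; ring
    · -- lower bound on image
      rintro y ⟨x, ⟨hx, hcon⟩, rfl⟩
      exact hlb x hx hcon
  · -- uniqueness
    intro x hx hcon hsum
    have hterm : ∀ ℓ ∈ Finset.univ, (R * (e (ℓ:Fin i):ℝ) - ((gam i (((ℓ:Fin i):ℕ)+1) : ℚ) : ℝ)) * x ℓ = 0 := by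
      have h1 : ∀ ℓ ∈ (Finset.univ : Finset (Fin i)),
          0 ≤ (R * (e (ℓ:ℕ) : ℝ) - ((gam i ((ℓ:ℕ)+1) : ℚ) : ℝ)) * x ℓ :=
        fun ℓ _ => mul_nonneg (sub_nonneg.2 (hqleR ℓ)) (hx ℓ)
      have h2 : ∑ ℓ : Fin i, (R * (e (ℓ:ℕ) : ℝ) - ((gam i ((ℓ:ℕ)+1) : ℚ) : ℝ)) * x ℓ ≤ 0 := by
        have hsplit : ∑ ℓ : Fin i, (R * (e (ℓ:ℕ) : ℝ) - ((gam i ((ℓ:ℕ)+1) : ℚ) : ℝ)) * x ℓ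
            = R * (e i : ℝ) - ∑ ℓ : Fin i, ((gam i ((ℓ:ℕ)+1) : ℚ) : ℝ) * x ℓ := by
          simp only [sub_mul, mul_assoc]
          rw [Finset.sum_sub_distrib, ← Finset.mul_sum, hsum]
        rw [hsplit]
        have : R * (e i : ℝ) = (kk i : ℝ) * ((gam i i : ℚ) : ℝ) := by
          rw [heiR, hgamiiR]; ring
        linarith
      have hzero : ∑ ℓ : Fin i, (R * (e (ℓ:ℕ) : ℝ) - ((gam i ((ℓ:ℕ)+1) : ℚ) : ℝ)) * x ℓ = 0 :=
        le_antisymm h2 (Finset.sum_nonneg h1)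
      exact (Finset.sum_eq_zero_iff_of_nonneg h1).mp hzero
    have hzero : ∀ ℓ : Fin i, ℓ ≠ j → x ℓ = 0 := by
      intro ℓ hℓ
      have hne : (ℓ:ℕ) ≠ i - 1 := by
        intro h; exact hℓ (Fin.ext (by simp [hj, h]))
      have hlt : (ℓ:ℕ) < i - 1 := by have := ℓ.isLt; omega
      rcases mul_eq_zero.mp (hterm ℓ (Finset.mem_univ ℓ)) with h | h
      · exfalso; have := hqltR ℓ hlt; linarith
      · exact h
    have hepR : (0:ℝ) < (e (i-1) : ℝ) := by exact_mod_cast hepos (i-1) (by omega)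
    have hxj : x j = (kk i : ℝ) := by
      have hsum2 : ∑ ℓ : Fin i, (e (ℓ:ℕ) : ℝ) * x ℓ = (e (i-1) : ℝ) * x j := by
        rw [Finset.sum_eq_single j]
        · intro b _ hb; rw [hzero b hb, mul_zero]
        · simp
      rw [hsum2, heiR] at hsum
      exact mul_left_cancel₀ (ne_of_gt hepR) (hsum.trans (mul_comm _ _))
    funext ℓ
    by_cases h : (ℓ:ℕ) = i - 1
    · have : ℓ = j := Fin.ext (by simp [hj, h])
      rw [this, hxj]; simp [hj]
    · simp only [if_neg h]
      exact hzero ℓ (fun hc => h (by simp [hc, hj]))
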